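/- Suppose a channel p(y,z|x) satisfies the degradedness Markov chain X → Y → Z. Then for every joint distribution p(v,x) on V × X (with the channel applied to X), I(V;Y) - I(V;Z) ≤ I(X;Y) - I(X;Z). -/

import Mathlib

open scoped BigOperators Classical

namespace Secrecy

/-- `-x log₂ x`, with the convention `0 log 0 = 0`. -/
noncomputable def nml (x : ℝ) : ℝ := - x * Real.logb 2 x

variable {Ω : Type} [Fintype Ω]

/-- Probability of an event under a pmf on a finite sample space. -/
noncomputable def pr (p : Ω → ℝ) (s : Ω → Prop) : ℝ := ∑ ω, if s ω then p ω else 0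

/-- `p` is a probability mass function. -/
def IsPMF (p : Ω → ℝ) : Prop := (∀ ω, 0 ≤ p ω) ∧ ∑ ω, p ω = 1

/-- Shannon entropy (base 2) of a finitely valued random variable. -/
noncomputable def H {A : Type} [Fintype A] (p : Ω → ℝ) (X : Ω → A) : ℝ :=
  ∑ a, nml (pr p (fun ω => X ω = a))

/-- Conditional entropy `H(X|Y) = H(X,Y) - H(Y)`. -/
noncomputable def Hc {A B : Type} [Fintype A] [Fintype B] (p : Ω → ℝ)
    (X : Ω → A) (Y : Ω → B) : ℝ :=
  H p (fun ω => (X ω, Y ω)) - H p Y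

/-- Mutual information `I(X;Y)`. -/
noncomputable def MI {A B : Type} [Fintype A] [Fintype B] (p : Ω → ℝ)
    (X : Ω → A) (Y : Ω → B) : ℝ :=
  H p X + H p Y - H p (fun ω => (X ω, Y ω))

/-- Conditional mutual information `I(X;Y|Z)`. -/
noncomputable def CMI {A B C : Type} [Fintype A] [Fintype B] [Fintype C]
    (p : Ω → ℝ) (X : Ω → A) (Y : Ω → B) (Z : Ω → C) : ℝ :=
  H p (fun ω => (X ω, Z ω)) + H p (fun ω => (Y ω, Z ω))
    - H p (fun ω => (X ω, Y ω, Z ω)) - H p Z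

/-- Markov chain `X → Y → Z` : `X` and `Z` are conditionally independent given `Y`. -/
def Markov {A B C : Type} (p : Ω → ℝ) (X : Ω → A) (Y : Ω → B) (Z : Ω → C) : Prop :=
  ∀ a b c,
    pr p (fun ω => X ω = a ∧ Y ω = b ∧ Z ω = c) * pr p (fun ω => Y ω = b) =
    pr p (fun ω => X ω = a ∧ Y ω = b) * pr p (fun ω => Y ω = b ∧ Z ω = c)

/-- The past `Y^{i-1}` of a random sequence, as a finitely valued random variable. -/
noncomputable def past {n : ℕ} {A : Type} (Y : Ω → Fin n → A) (i : Fin n) :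
    Ω → (Fin n → Option A) :=
  fun ω j => if j < i then some (Y ω j) else none

/-- The future `Z_{i+1}^n` of a random sequence, as a finitely valued random variable. -/
noncomputable def future {n : ℕ} {A : Type} (Z : Ω → Fin n → A) (i : Fin n) :
    Ω → (Fin n → Option A) :=
  fun ω j => if i < j then some (Z ω j) else none

/-- A discrete memoryless channel from `A` to `B`: a conditional pmf. -/
def IsChannel {A B : Type} [Fintype B] (W : A → B → ℝ) : Prop :=
  (∀ a b, 0 ≤ W a b) ∧ ∀ a, ∑ b, W a b = 1

/-- Joint pmf of an input distribution `q(u,x)` and a channel `W(o|x)`. -/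
noncomputable def joint {U X O : Type} (q : U × X → ℝ) (W : X → O → ℝ) :
    U × X × O → ℝ :=
  fun w => q (w.1, w.2.1) * W w.2.1 w.2.2

/-- `Y` is less noisy than `Z` for the channel `W(y,z|x)` : for every auxiliary `U` with
`U → X → (Y,Z)`, i.e. every joint input pmf `q(u,x)`, `I(U;Y) ≥ I(U;Z)`. -/
def LessNoisy {X Y Z : Type} [Fintype X] [Fintype Y] [Fintype Z]
    (W : X → Y × Z → ℝ) : Prop :=
  ∀ (U : Type) (_ : Fintype U) (q : U × X → ℝ), IsPMF q →
    MI (joint q W) (fun w => w.1) (fun w => w.2.2.2) ≤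
    MI (joint q W) (fun w => w.1) (fun w => w.2.2.1)

/-- `Y` is more capable than `Z` for the channel `W(y,z|x)` : `I(X;Y) ≥ I(X;Z)` for
every input pmf `q(x)`. -/
def MoreCapable {X Y Z : Type} [Fintype X] [Fintype Y] [Fintype Z]
    (W : X → Y × Z → ℝ) : Prop :=
  ∀ q : X → ℝ, IsPMF q →
    MI (fun w : X × Y × Z => q w.1 * W w.1 w.2) (fun w => w.1) (fun w => w.2.2) ≤
    MI (fun w : X × Y × Z => q w.1 * W w.1 w.2) (fun w => w.1) (fun w => w.2.1)

/-- Conditional pmf given an event. -/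
noncomputable def condp (p : Ω → ℝ) (s : Ω → Prop) : Ω → ℝ :=
  fun ω => if s ω then p ω / pr p s else 0

/-- Number of occurrences of `v` in the sequence `vs`. -/
noncomputable def Nocc {n : ℕ} {V : Type} (vs : Fin n → V) (v : V) : ℕ :=
  (Finset.univ.filter (fun i => vs i = v)).card

/-- Binary entropy (base 2). -/
noncomputable def binEnt (γ : ℝ) : ℝ := nml γ + nml (1 - γ)

end Secrecy

set_option linter.unusedSectionVars false

namespace StmtAux
open Secrecy

variable {Ω : Type} [Fintype Ω]

lemma pr_nonneg (p : Ω → ℝ) (hp0 : ∀ ω, 0 ≤ p ω) (s : Ω → Prop) : 0 ≤ pr p s := by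
  apply Finset.sum_nonneg
  intro ω _
  by_cases h : s ω <;> simp [h, hp0 ω]

lemma pr_congr (p : Ω → ℝ) {s t : Ω → Prop} (h : ∀ ω, s ω ↔ t ω) : pr p s = pr p t := by
  unfold pr
  exact Finset.sum_congr rfl fun ω _ => by simp [h ω]

lemma pr_split {β : Type} [Fintype β] (p : Ω → ℝ) (s : Ω → Prop) (f : Ω → β) :
    pr p s = ∑ b, pr p fun ω => s ω ∧ f ω = b := by
  unfold pr
  rw [Finset.sum_comm]
  apply Finset.sum_congr rfl
  intro ω _
  by_cases hs : s ω <;> simp [hs]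

lemma pr_mono (p : Ω → ℝ) (hp0 : ∀ ω, 0 ≤ p ω) {s t : Ω → Prop} (h : ∀ ω, s ω → t ω) :
    pr p s ≤ pr p t := by
  apply Finset.sum_le_sum
  intro ω _
  by_cases hs : s ω
  · simp [hs, h ω hs]
  · by_cases ht : t ω <;> simp [hs, ht, hp0 ω]

lemma gibbs {ι : Type} [Fintype ι] (w r : ι → ℝ) (hw : ∀ i, 0 ≤ w i)
    (hr : ∀ i, 0 ≤ r i) (hwr : ∀ i, 0 < w i → 0 < r i)
    (hsum : ∑ i, r i ≤ ∑ i, w i) :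
    ∑ i, w i * Real.log (r i / w i) ≤ 0 := by
  have key : ∀ i, w i * Real.log (r i / w i) ≤ r i - w i := by
    intro i
    rcases eq_or_lt_of_le (hw i) with h | h
    · simpa [← h] using hr i
    · have hri := hwr i h
      have hdiv : 0 < r i / w i := div_pos hri h
      have hlog := Real.log_le_sub_one_of_pos hdiv
      calc w i * Real.log (r i / w i) ≤ w i * (r i / w i - 1) :=
            mul_le_mul_of_nonneg_left hlog (le_of_lt h)
        _ = r i - w i := by field_simp
  calc ∑ i, w i * Real.log (r i / w i) ≤ ∑ i, (r i - w i) :=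
        Finset.sum_le_sum fun i _ => key i
    _ = ∑ i, r i - ∑ i, w i := Finset.sum_sub_distrib _ _
    _ ≤ 0 := by linarith

lemma sum_comm₃ {α β γ M : Type} [Fintype α] [Fintype β] [Fintype γ] [AddCommMonoid M]
    (f : α → β → γ → M) :
    (∑ a, ∑ b, ∑ c, f a b c) = ∑ c, ∑ a, ∑ b, f a b c := by
  have h1 : ∀ a : α, (∑ b, ∑ c, f a b c) = ∑ c, ∑ b, f a b c := fun a => Finset.sum_comm
  simp_rw [h1]
  exact Finset.sum_comm

lemma sum_comm₃' {α β γ M : Type} [Fintype α] [Fintype β] [Fintype γ] [AddCommMonoid M]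
    (f : α → β → γ → M) :
    (∑ a, ∑ b, ∑ c, f a b c) = ∑ a, ∑ c, ∑ b, f a b c :=
  Finset.sum_congr rfl fun a _ => Finset.sum_comm

lemma H_relabel {α β : Type} [Fintype α] [Fintype β] (p : Ω → ℝ) (e : α ≃ β) (X : Ω → α) :
    H p (fun ω => e (X ω)) = H p X := by
  unfold H
  rw [← Equiv.sum_comp e (fun b => nml (pr p fun ω => e (X ω) = b))]
  apply Finset.sum_congr rfl
  intro a _
  congr 1
  exact pr_congr p fun ω => by simp

section m
variable {α β γ : Type} [Fintype α] [Fintype β] [Fintype γ]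

noncomputable def m1 (p : Ω → ℝ) (A : Ω → α) (a : α) : ℝ := pr p fun ω => A ω = a
noncomputable def m2 (p : Ω → ℝ) (A : Ω → α) (B : Ω → β) (a : α) (b : β) : ℝ :=
  pr p fun ω => A ω = a ∧ B ω = b
noncomputable def m3 (p : Ω → ℝ) (A : Ω → α) (B : Ω → β) (C : Ω → γ)
    (a : α) (b : β) (c : γ) : ℝ :=
  pr p fun ω => A ω = a ∧ B ω = b ∧ C ω = c

variable (p : Ω → ℝ) (A : Ω → α) (B : Ω → β) (C : Ω → γ)

lemma m2_13 (a : α) (c : γ) : m2 p A C a c = ∑ b, m3 p A B C a b c := by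
  rw [m2, pr_split p _ B]
  exact Finset.sum_congr rfl fun b _ => pr_congr p fun ω => by tauto

lemma m2_23 (b : β) (c : γ) : m2 p B C b c = ∑ a, m3 p A B C a b c := by
  rw [m2, pr_split p _ A]
  exact Finset.sum_congr rfl fun a _ => pr_congr p fun ω => by tauto

lemma m2_12 (a : α) (b : β) : m2 p A B a b = ∑ c, m3 p A B C a b c := by
  rw [m2, pr_split p _ C]
  exact Finset.sum_congr rfl fun c _ => pr_congr p fun ω => by tauto

lemma m1_2 (b : β) : m1 p B b = ∑ a, ∑ c, m3 p A B C a b c := by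
  rw [m1, pr_split p _ A]
  exact Finset.sum_congr rfl fun a _ => by
    rw [pr_split p _ C]
    exact Finset.sum_congr rfl fun c _ => pr_congr p fun ω => by tauto

lemma m1_3 (c : γ) : m1 p C c = ∑ a, ∑ b, m3 p A B C a b c := by
  rw [m1, pr_split p _ A]
  exact Finset.sum_congr rfl fun a _ => by
    rw [pr_split p _ B]
    exact Finset.sum_congr rfl fun b _ => pr_congr p fun ω => by tauto

lemma m1_3A (c : γ) : m1 p C c = ∑ a, m2 p A C a c := by
  rw [m1, pr_split p _ A]
  exact Finset.sum_congr rfl fun a _ => pr_congr p fun ω => by tauto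

lemma m1_3B (c : γ) : m1 p C c = ∑ b, m2 p B C b c := by
  rw [m1, pr_split p _ B]
  exact Finset.sum_congr rfl fun b _ => pr_congr p fun ω => by tauto

lemma H_eq_m2 : H p (fun ω => (A ω, C ω)) = ∑ a, ∑ c, nml (m2 p A C a c) := by
  rw [H, Fintype.sum_prod_type]
  exact Finset.sum_congr rfl fun a _ => Finset.sum_congr rfl fun c _ => by
    congr 1
    exact pr_congr p fun ω => by simp [Prod.ext_iff]

lemma H_eq_m3 :
    H p (fun ω => (A ω, B ω, C ω)) = ∑ a, ∑ b, ∑ c, nml (m3 p A B C a b c) := by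
  rw [H, Fintype.sum_prod_type]
  refine Finset.sum_congr rfl fun a _ => ?_
  rw [Fintype.sum_prod_type]
  exact Finset.sum_congr rfl fun b _ => Finset.sum_congr rfl fun c _ => by
    congr 1
    exact pr_congr p fun ω => by simp [Prod.ext_iff]

-- triple-sum representations
lemma H_AC_rep : H p (fun ω => (A ω, C ω)) =
    -∑ a, ∑ b, ∑ c, m3 p A B C a b c * Real.logb 2 (m2 p A C a c) := by
  rw [H_eq_m2 p A C]
  have key : ∀ a c, nml (m2 p A C a c) =
      -∑ b, m3 p A B C a b c * Real.logb 2 (m2 p A C a c) := by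
    intro a c
    rw [nml, neg_mul]
    congr 1
    rw [← Finset.sum_mul, ← m2_13 p A B C a c]
  simp_rw [key]
  simp only [Finset.sum_neg_distrib]
  congr 1
  exact (sum_comm₃' _).symm

lemma H_BC_rep : H p (fun ω => (B ω, C ω)) =
    -∑ a, ∑ b, ∑ c, m3 p A B C a b c * Real.logb 2 (m2 p B C b c) := by
  rw [H_eq_m2 p B C]
  have key : ∀ b c, nml (m2 p B C b c) =
      -∑ a, m3 p A B C a b c * Real.logb 2 (m2 p B C b c) := by
    intro b c
    rw [nml, neg_mul]
    congr 1
    rw [← Finset.sum_mul, ← m2_23 p A B C b c]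
  simp_rw [key]
  simp only [Finset.sum_neg_distrib]
  congr 1
  exact (sum_comm₃ fun b c a => m3 p A B C a b c * Real.logb 2 (m2 p B C b c))

lemma H_C_rep : H p C =
    -∑ a, ∑ b, ∑ c, m3 p A B C a b c * Real.logb 2 (m1 p C c) := by
  have key : ∀ c, nml (m1 p C c) =
      -∑ a, ∑ b, m3 p A B C a b c * Real.logb 2 (m1 p C c) := by
    intro c
    rw [nml, neg_mul]
    congr 1
    simp_rw [← Finset.sum_mul]
    rw [← m1_3 p A B C c]
  have hH : H p C = ∑ c, nml (m1 p C c) := rfl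
  rw [hH]
  simp_rw [key]
  simp only [Finset.sum_neg_distrib]
  congr 1
  rw [sum_comm₃ fun c a b => m3 p A B C a b c * Real.logb 2 (m1 p C c)]
  exact sum_comm₃ fun b c a => m3 p A B C a b c * Real.logb 2 (m1 p C c)

lemma H_B_rep : H p B =
    -∑ a, ∑ b, ∑ c, m3 p A B C a b c * Real.logb 2 (m1 p B b) := by
  have key : ∀ b, nml (m1 p B b) =
      -∑ a, ∑ c, m3 p A B C a b c * Real.logb 2 (m1 p B b) := by
    intro b
    rw [nml, neg_mul]
    congr 1
    simp_rw [← Finset.sum_mul]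
    rw [← m1_2 p A B C b]
  have hH : H p B = ∑ b, nml (m1 p B b) := rfl
  rw [hH]
  simp_rw [key]
  simp only [Finset.sum_neg_distrib]
  congr 1
  rw [sum_comm₃ fun b a c => m3 p A B C a b c * Real.logb 2 (m1 p B b)]
  rw [sum_comm₃ fun c b a => m3 p A B C a b c * Real.logb 2 (m1 p B b)]
  exact sum_comm₃' fun a c b => m3 p A B C a b c * Real.logb 2 (m1 p B b)

lemma H_ABC_rep : H p (fun ω => (A ω, B ω, C ω)) =
    -∑ a, ∑ b, ∑ c, m3 p A B C a b c * Real.logb 2 (m3 p A B C a b c) := by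
  rw [H_eq_m3]
  simp_rw [nml, neg_mul]
  simp only [Finset.sum_neg_distrib]

lemma H_AB_rep : H p (fun ω => (A ω, B ω)) =
    -∑ a, ∑ b, ∑ c, m3 p A B C a b c * Real.logb 2 (m2 p A B a b) := by
  rw [H_eq_m2 p A B]
  have key : ∀ a b, nml (m2 p A B a b) =
      -∑ c, m3 p A B C a b c * Real.logb 2 (m2 p A B a b) := by
    intro a b
    rw [nml, neg_mul]
    congr 1
    rw [← Finset.sum_mul, ← m2_12 p A B C a b]
  simp_rw [key]
  simp only [Finset.sum_neg_distrib]

lemma markov_ent (hp0 : ∀ ω, 0 ≤ p ω) (h : Markov p A B C) :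
    H p (fun ω => (A ω, B ω)) + H p (fun ω => (B ω, C ω)) =
      H p (fun ω => (A ω, B ω, C ω)) + H p B := by
  rw [H_AB_rep p A B C, H_BC_rep p A B C, H_ABC_rep p A B C, H_B_rep p A B C]
  have key : ∀ a b c,
      m3 p A B C a b c * Real.logb 2 (m2 p A B a b)
        + m3 p A B C a b c * Real.logb 2 (m2 p B C b c)
      = m3 p A B C a b c * Real.logb 2 (m3 p A B C a b c)
        + m3 p A B C a b c * Real.logb 2 (m1 p B b) := by
    intro a b c
    rcases eq_or_lt_of_le (pr_nonneg p hp0 _ : (0:ℝ) ≤ m3 p A B C a b c) with h0 | h0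
    · have h0' : m3 p A B C a b c = 0 := h0.symm
      rw [h0']; ring
    · have h0' : 0 < m3 p A B C a b c := h0
      have hAB : 0 < m2 p A B a b :=
        lt_of_lt_of_le h0 (pr_mono p hp0 fun ω hw => ⟨hw.1, hw.2.1⟩)
      have hBC : 0 < m2 p B C b c :=
        lt_of_lt_of_le h0 (pr_mono p hp0 fun ω hw => ⟨hw.2.1, hw.2.2⟩)
      have hB : 0 < m1 p B b := lt_of_lt_of_le h0 (pr_mono p hp0 fun ω hw => hw.2.1)
      have hm : m3 p A B C a b c * m1 p B b = m2 p A B a b * m2 p B C b c := h a b c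
      have hlog : Real.logb 2 (m2 p A B a b) + Real.logb 2 (m2 p B C b c)
          = Real.logb 2 (m3 p A B C a b c) + Real.logb 2 (m1 p B b) := by
        rw [← Real.logb_mul (ne_of_gt hAB) (ne_of_gt hBC),
          ← Real.logb_mul (ne_of_gt h0') (ne_of_gt hB), hm]
      linear_combination m3 p A B C a b c * hlog
  have hsum : (∑ a, ∑ b, ∑ c, (m3 p A B C a b c * Real.logb 2 (m2 p A B a b)
        + m3 p A B C a b c * Real.logb 2 (m2 p B C b c)))
      = ∑ a, ∑ b, ∑ c, (m3 p A B C a b c * Real.logb 2 (m3 p A B C a b c)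
        + m3 p A B C a b c * Real.logb 2 (m1 p B b)) :=
    Finset.sum_congr rfl fun a _ => Finset.sum_congr rfl fun b _ =>
      Finset.sum_congr rfl fun c _ => key a b c
  simp only [Finset.sum_add_distrib] at hsum
  linarith [hsum]

lemma cmi_nonneg (hp0 : ∀ ω, 0 ≤ p ω) :
    H p (fun ω => (A ω, B ω, C ω)) + H p C ≤
      H p (fun ω => (A ω, C ω)) + H p (fun ω => (B ω, C ω)) := by
  have log2pos : (0:ℝ) < Real.log 2 := Real.log_pos one_lt_two
  have key : ∑ a, ∑ b, ∑ c, m3 p A B C a b c *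
      Real.log ((m2 p A C a c * m2 p B C b c / m1 p C c) / m3 p A B C a b c) ≤ 0 := by
    have hg := gibbs (ι := α × β × γ)
      (fun i => m3 p A B C i.1 i.2.1 i.2.2)
      (fun i => m2 p A C i.1 i.2.2 * m2 p B C i.2.1 i.2.2 / m1 p C i.2.2)
      (fun i => pr_nonneg p hp0 _)
      (fun i => div_nonneg (mul_nonneg (pr_nonneg p hp0 _) (pr_nonneg p hp0 _))
        (pr_nonneg p hp0 _))
      (fun i hwi => by
        have hAC : 0 < m2 p A C i.1 i.2.2 :=
          lt_of_lt_of_le hwi (pr_mono p hp0 fun ω hw => ⟨hw.1, hw.2.2⟩)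
        have hBC : 0 < m2 p B C i.2.1 i.2.2 :=
          lt_of_lt_of_le hwi (pr_mono p hp0 fun ω hw => ⟨hw.2.1, hw.2.2⟩)
        have hC : 0 < m1 p C i.2.2 := lt_of_lt_of_le hwi (pr_mono p hp0 fun ω hw => hw.2.2)
        exact div_pos (mul_pos hAC hBC) hC)
      (by
        simp only [Fintype.sum_prod_type]
        rw [sum_comm₃ fun a b c => m2 p A C a c * m2 p B C b c / m1 p C c,
          sum_comm₃ fun a b c => m3 p A B C a b c]
        apply Finset.sum_le_sum
        intro c _
        rcases eq_or_lt_of_le (pr_nonneg p hp0 _ : (0:ℝ) ≤ m1 p C c) with h0 | h0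
        · have h0' : m1 p C c = 0 := h0.symm
          have hz : ∀ b, m2 p B C b c = 0 := fun b =>
            le_antisymm (h0' ▸ (pr_mono p hp0 fun ω hw => hw.2 : m2 p B C b c ≤ m1 p C c))
              (pr_nonneg p hp0 _)
          have : (∑ a, ∑ b, m2 p A C a c * m2 p B C b c / m1 p C c) = 0 := by
            simp [hz]
          rw [this]
          exact Finset.sum_nonneg fun a _ => Finset.sum_nonneg fun b _ => pr_nonneg p hp0 _
        · have h0' : 0 < m1 p C c := h0
          have hinner : ∀ a, (∑ b, m2 p A C a c * m2 p B C b c / m1 p C c)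
              = m2 p A C a c := by
            intro a
            have hpt : ∀ b, m2 p A C a c * m2 p B C b c / m1 p C c
                = (m2 p A C a c / m1 p C c) * m2 p B C b c := fun b => by ring
            simp_rw [hpt]
            rw [← Finset.mul_sum, ← m1_3B p B C c, div_mul_cancel₀ _ (ne_of_gt h0')]
          simp_rw [hinner]
          rw [← m1_3A p A C c]
          apply le_of_eq
          exact m1_3 p A B C c)
    simpa only [Fintype.sum_prod_type] using hg
  have point : ∀ a b c, -(Real.log 2)⁻¹ * (m3 p A B C a b c *
      Real.log ((m2 p A C a c * m2 p B C b c / m1 p C c) / m3 p A B C a b c))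
      = m3 p A B C a b c * Real.logb 2 (m3 p A B C a b c)
        + m3 p A B C a b c * Real.logb 2 (m1 p C c)
        - m3 p A B C a b c * Real.logb 2 (m2 p A C a c)
        - m3 p A B C a b c * Real.logb 2 (m2 p B C b c) := by
    intro a b c
    rcases eq_or_lt_of_le (pr_nonneg p hp0 _ : (0:ℝ) ≤ m3 p A B C a b c) with h0 | h0
    · have h0' : m3 p A B C a b c = 0 := h0.symm
      rw [h0']; ring
    · have h0' : 0 < m3 p A B C a b c := h0
      have hAC : 0 < m2 p A C a c :=
        lt_of_lt_of_le h0 (pr_mono p hp0 fun ω hw => ⟨hw.1, hw.2.2⟩)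
      have hBC : 0 < m2 p B C b c :=
        lt_of_lt_of_le h0 (pr_mono p hp0 fun ω hw => ⟨hw.2.1, hw.2.2⟩)
      have hC : 0 < m1 p C c := lt_of_lt_of_le h0 (pr_mono p hp0 fun ω hw => hw.2.2)
      have hlog : Real.log ((m2 p A C a c * m2 p B C b c / m1 p C c) / m3 p A B C a b c)
          = Real.log (m2 p A C a c) + Real.log (m2 p B C b c)
            - Real.log (m1 p C c) - Real.log (m3 p A B C a b c) := by
        rw [div_div, Real.log_div (by positivity) (by positivity),
          Real.log_mul (ne_of_gt hAC) (ne_of_gt hBC),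
          Real.log_mul (ne_of_gt hC) (ne_of_gt h0')]
        ring
      rw [hlog]
      simp only [Real.logb]
      field_simp
      ring
  have hD : (H p (fun ω => (A ω, C ω)) + H p (fun ω => (B ω, C ω)))
      - (H p (fun ω => (A ω, B ω, C ω)) + H p C)
      = -(Real.log 2)⁻¹ * ∑ a, ∑ b, ∑ c, m3 p A B C a b c *
        Real.log ((m2 p A C a c * m2 p B C b c / m1 p C c) / m3 p A B C a b c) := by
    rw [H_AC_rep p A B C, H_BC_rep p A B C, H_ABC_rep p A B C, H_C_rep p A B C]
    have step : (∑ a, ∑ b, ∑ c, (-(Real.log 2)⁻¹ * (m3 p A B C a b c *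
        Real.log ((m2 p A C a c * m2 p B C b c / m1 p C c) / m3 p A B C a b c))))
        = ∑ a, ∑ b, ∑ c,
          (m3 p A B C a b c * Real.logb 2 (m3 p A B C a b c)
            + m3 p A B C a b c * Real.logb 2 (m1 p C c)
            - m3 p A B C a b c * Real.logb 2 (m2 p A C a c)
            - m3 p A B C a b c * Real.logb 2 (m2 p B C b c)) :=
      Finset.sum_congr rfl fun a _ => Finset.sum_congr rfl fun b _ =>
        Finset.sum_congr rfl fun c _ => point a b c
    simp only [← Finset.mul_sum] at step
    rw [step]
    simp only [Finset.sum_sub_distrib, Finset.sum_add_distrib]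
    ring
  have e : -(Real.log 2)⁻¹ * (∑ a, ∑ b, ∑ c, m3 p A B C a b c *
      Real.log ((m2 p A C a c * m2 p B C b c / m1 p C c) / m3 p A B C a b c))
      = (Real.log 2)⁻¹ * (-(∑ a, ∑ b, ∑ c, m3 p A B C a b c *
      Real.log ((m2 p A C a c * m2 p B C b c / m1 p C c) / m3 p A B C a b c))) := by ring
  have hnn : 0 ≤ (Real.log 2)⁻¹ * (-(∑ a, ∑ b, ∑ c, m3 p A B C a b c *
      Real.log ((m2 p A C a c * m2 p B C b c / m1 p C c) / m3 p A B C a b c))) :=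
    mul_nonneg (by positivity) (by linarith)
  linarith [hD, e, hnn]

end m
lemma markov_fst {VT XT YT ZT : Type} [Fintype ZT]
    (p : Ω → ℝ) (V : Ω → VT) (X : Ω → XT) (Y : Ω → YT) (Z : Ω → ZT)
    (h : Markov p V X (fun ω => (Y ω, Z ω))) : Markov p V X Y := by
  intro a b y
  have hA : pr p (fun ω => V ω = a ∧ X ω = b ∧ Y ω = y)
      = ∑ z, pr p (fun ω => V ω = a ∧ X ω = b ∧ (Y ω, Z ω) = (y, z)) := by
    rw [pr_split p _ Z]
    exact Finset.sum_congr rfl fun z _ => pr_congr p fun ω => by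
      simp only [Prod.mk.injEq]; tauto
  have hB : pr p (fun ω => X ω = b ∧ Y ω = y)
      = ∑ z, pr p (fun ω => X ω = b ∧ (Y ω, Z ω) = (y, z)) := by
    rw [pr_split p _ Z]
    exact Finset.sum_congr rfl fun z _ => pr_congr p fun ω => by
      simp only [Prod.mk.injEq]; tauto
  rw [hA, hB, Finset.sum_mul, Finset.mul_sum]
  exact Finset.sum_congr rfl fun z _ => h a b (y, z)

lemma markov_snd {VT XT YT ZT : Type} [Fintype YT]
    (p : Ω → ℝ) (V : Ω → VT) (X : Ω → XT) (Y : Ω → YT) (Z : Ω → ZT)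
    (h : Markov p V X (fun ω => (Y ω, Z ω))) : Markov p V X Z := by
  intro a b z
  have hA : pr p (fun ω => V ω = a ∧ X ω = b ∧ Z ω = z)
      = ∑ y, pr p (fun ω => V ω = a ∧ X ω = b ∧ (Y ω, Z ω) = (y, z)) := by
    rw [pr_split p _ Y]
    exact Finset.sum_congr rfl fun y _ => pr_congr p fun ω => by
      simp only [Prod.mk.injEq]; tauto
  have hB : pr p (fun ω => X ω = b ∧ Z ω = z)
      = ∑ y, pr p (fun ω => X ω = b ∧ (Y ω, Z ω) = (y, z)) := by
    rw [pr_split p _ Y]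
    exact Finset.sum_congr rfl fun y _ => pr_congr p fun ω => by
      simp only [Prod.mk.injEq]; tauto
  rw [hA, hB, Finset.sum_mul, Finset.mul_sum]
  exact Finset.sum_congr rfl fun y _ => h a b (y, z)

end StmtAux

set_option maxHeartbeats 2000000 in
open Secrecy StmtAux in
/-- for a degraded chain `V → X → Y → Z`,
`I(V;Y) - I(V;Z) ≤ I(X;Y) - I(X;Z)`. -/
theorem stmt5 {Ω VT XT YT ZT : Type} [Fintype Ω] [Fintype VT] [Fintype XT]
    [Fintype YT] [Fintype ZT]
    (p : Ω → ℝ) (hp : IsPMF p) (V : Ω → VT) (X : Ω → XT) (Y : Ω → YT) (Z : Ω → ZT)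
    (h1 : Markov p V X (fun ω => (Y ω, Z ω)))
    (h2 : Markov p (fun ω => (V ω, X ω)) Y Z) :
    MI p V Y - MI p V Z ≤ MI p X Y - MI p X Z := by
  simp only [MI]
  have hp0 : ∀ ω, 0 ≤ p ω := hp.1
  have E1 : H p (fun ω => (V ω, X ω)) + H p (fun ω => (X ω, Y ω)) =
      H p (fun ω => (V ω, X ω, Y ω)) + H p X :=
    markov_ent p V X Y hp0 (markov_fst p V X Y Z h1)
  have E2 : H p (fun ω => (V ω, X ω)) + H p (fun ω => (X ω, Z ω)) =
      H p (fun ω => (V ω, X ω, Z ω)) + H p X :=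
    markov_ent p V X Z hp0 (markov_snd p V X Y Z h1)
  have E3 : H p (fun ω => ((V ω, X ω), Y ω)) + H p (fun ω => (Y ω, Z ω)) =
      H p (fun ω => ((V ω, X ω), Y ω, Z ω)) + H p Y :=
    markov_ent p (fun ω => (V ω, X ω)) Y Z hp0 h2
  have E4 : H p (fun ω => (X ω, Y ω, (V ω, Z ω))) + H p (fun ω => (V ω, Z ω)) ≤
      H p (fun ω => (X ω, (V ω, Z ω))) + H p (fun ω => (Y ω, (V ω, Z ω))) :=
    cmi_nonneg p X Y (fun ω => (V ω, Z ω)) hp0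
  have E5 : H p (fun ω => (V ω, Z ω, Y ω)) + H p Y ≤
      H p (fun ω => (V ω, Y ω)) + H p (fun ω => (Z ω, Y ω)) :=
    cmi_nonneg p V Z Y hp0
  have r1 : H p (fun ω => ((V ω, X ω), Y ω)) = H p (fun ω => (V ω, X ω, Y ω)) :=
    H_relabel p ⟨fun w => ((w.1, w.2.1), w.2.2), fun w => (w.1.1, w.1.2, w.2),
      fun _ => rfl, fun _ => rfl⟩ (fun ω => (V ω, X ω, Y ω))
  have r2 : H p (fun ω => ((V ω, X ω), Y ω, Z ω)) =
      H p (fun ω => (V ω, X ω, Y ω, Z ω)) :=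
    H_relabel p ⟨fun w => ((w.1, w.2.1), w.2.2), fun w => (w.1.1, w.1.2, w.2),
      fun _ => rfl, fun _ => rfl⟩ (fun ω => (V ω, X ω, Y ω, Z ω))
  have r3 : H p (fun ω => (X ω, (V ω, Z ω))) = H p (fun ω => (V ω, X ω, Z ω)) :=
    H_relabel p ⟨fun w => (w.2.1, (w.1, w.2.2)), fun w => (w.2.1, w.1, w.2.2),
      fun _ => rfl, fun _ => rfl⟩ (fun ω => (V ω, X ω, Z ω))
  have r4 : H p (fun ω => (X ω, Y ω, (V ω, Z ω))) =
      H p (fun ω => (V ω, X ω, Y ω, Z ω)) :=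
    H_relabel p ⟨fun w => (w.2.1, w.2.2.1, (w.1, w.2.2.2)),
      fun w => (w.2.2.1, w.1, w.2.1, w.2.2.2),
      fun _ => rfl, fun _ => rfl⟩ (fun ω => (V ω, X ω, Y ω, Z ω))
  have r5 : H p (fun ω => (Y ω, (V ω, Z ω))) = H p (fun ω => (V ω, Y ω, Z ω)) :=
    H_relabel p ⟨fun w => (w.2.1, (w.1, w.2.2)), fun w => (w.2.1, w.1, w.2.2),
      fun _ => rfl, fun _ => rfl⟩ (fun ω => (V ω, Y ω, Z ω))
  have r6 : H p (fun ω => (V ω, Z ω, Y ω)) = H p (fun ω => (V ω, Y ω, Z ω)) :=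
    H_relabel p ⟨fun w => (w.1, w.2.2, w.2.1), fun w => (w.1, w.2.2, w.2.1),
      fun _ => rfl, fun _ => rfl⟩ (fun ω => (V ω, Y ω, Z ω))
  have r7 : H p (fun ω => (Z ω, Y ω)) = H p (fun ω => (Y ω, Z ω)) :=
    H_relabel p ⟨fun w => (w.2, w.1), fun w => (w.2, w.1),
      fun _ => rfl, fun _ => rfl⟩ (fun ω => (Y ω, Z ω))
  linarith [E1, E2, E3, E4, E5, r1, r2, r3, r4, r5, r6, r7]
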